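/- Let m, n ≥ 3 with m ≠ n. Then the state complexity of Uₘ(a,b,∅) ∩ Uₙ(a,b,∅) is exactly mn. In particular, even when gcd(m, n) > 1, all mn product states are reachable and pairwise distinguishable in the direct product automaton with the single final state (m−1, n−1). -/
import Mathlib


namespace SCPaper

/-- Reversal of a language. -/
def rev {α : Type} (L : Language α) : Language α := {w | w.reverse ∈ L}

/-- Union of two languages. -/
def lunion {α : Type} (K L : Language α) : Language α := {w | w ∈ K ∨ w ∈ L}

/-- Intersection of two languages. -/
def linter {α : Type} (K L : Language α) : Language α := {w | w ∈ K ∧ w ∈ L}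

/-- Difference of two languages. -/
def ldiff {α : Type} (K L : Language α) : Language α := {w | w ∈ K ∧ w ∉ L}

/-- Symmetric difference of two languages. -/
def lsymm {α : Type} (K L : Language α) : Language α := lunion (ldiff K L) (ldiff L K)

/-- Sizes (numbers of states) of complete DFAs recognizing `L`. -/
def complexitySet {α : Type} (L : Language α) : Set ℕ :=
  {n | ∃ M : DFA α (Fin n), M.accepts = L}

/-- A language is regular if it is recognized by some finite DFA. -/
def Regular {α : Type} (L : Language α) : Prop := (complexitySet L).Nonempty

/-- State complexity: the number of states of a minimal DFA for `L`. -/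
noncomputable def sc {α : Type} (L : Language α) : ℕ := sInf (complexitySet L)

/-- The cyclic permutation (0,1,…,n−1). -/
def cyc (n : ℕ) (i : Fin n) : Fin n :=
  ⟨(i.val + 1) % n, Nat.mod_lt _ (Nat.lt_of_le_of_lt (Nat.zero_le _) i.isLt)⟩

/-- The transposition (0,1). -/
def tp01 (n : ℕ) (i : Fin n) : Fin n :=
  if i.val = 0 then ⟨1 % n, Nat.mod_lt _ (Nat.lt_of_le_of_lt (Nat.zero_le _) i.isLt)⟩
  else if i.val = 1 then ⟨0, Nat.lt_of_le_of_lt (Nat.zero_le _) i.isLt⟩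
  else i

/-- The singular map sending n−1 to 0 and fixing everything else. -/
def sing (n : ℕ) (i : Fin n) : Fin n :=
  if i.val = n - 1 then ⟨0, Nat.lt_of_le_of_lt (Nat.zero_le _) i.isLt⟩ else i

/-- The transposition (n−2, n−1). -/
def tpTop (n : ℕ) (i : Fin n) : Fin n :=
  if i.val = n - 1 then ⟨n - 2, by have := i.isLt; omega⟩
  else if i.val = n - 2 then ⟨n - 1, by have := i.isLt; omega⟩
  else i

/-- The singular map sending n−1 to n−2 and fixing everything else. -/
def singTop (n : ℕ) (i : Fin n) : Fin n :=
  if i.val = n - 1 then ⟨n - 2, by have := i.isLt; omega⟩ else i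

/-- 𝒰ₙ(a,b,∅): binary alphabet, a = cycle (0,…,n−1), b = transposition (0,1),
initial state 0, final state n−1. -/
def U2dfa (n : ℕ) (h : 0 < n) : DFA (Fin 2) (Fin n) where
  step := fun i x => if x = 0 then cyc n i else tp01 n i
  start := ⟨0, h⟩
  accept := {i | i.val = n - 1}

def U2 (n : ℕ) (h : 0 < n) : Language (Fin 2) := (U2dfa n h).accepts

/-- 𝒰ₙ(a,b,c): a = cycle, b = transposition (0,1), c = (n−1 ↦ 0). -/
def Udfa (n : ℕ) (h : 0 < n) : DFA (Fin 3) (Fin n) where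
  step := fun i x => if x = 0 then cyc n i else if x = 1 then tp01 n i else sing n i
  start := ⟨0, h⟩
  accept := {i | i.val = n - 1}

def U (n : ℕ) (h : 0 < n) : Language (Fin 3) := (Udfa n h).accepts

/-- 𝒰ₙ(a,b,c) with final state set {0}. -/
def U0dfa (n : ℕ) (h : 0 < n) : DFA (Fin 3) (Fin n) where
  step := fun i x => if x = 0 then cyc n i else if x = 1 then tp01 n i else sing n i
  start := ⟨0, h⟩
  accept := {i | i.val = 0}

def U0 (n : ℕ) (h : 0 < n) : Language (Fin 3) := (U0dfa n h).accepts

/-- 𝒰ₙ(a,b,c,d): a = cycle, b = transposition (0,1), c = (n−1 ↦ 0), d = identity. -/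
def U4dfa (n : ℕ) (h : 0 < n) : DFA (Fin 4) (Fin n) where
  step := fun i x =>
    if x = 0 then cyc n i else if x = 1 then tp01 n i else if x = 2 then sing n i else i
  start := ⟨0, h⟩
  accept := {i | i.val = n - 1}

def U4 (n : ℕ) (h : 0 < n) : Language (Fin 4) := (U4dfa n h).accepts

/-- 𝒰ₙ(d,c,b,a): d = cycle, c = transposition (0,1), b = (n−1 ↦ 0), a = identity. -/
def U4dcbaDfa (n : ℕ) (h : 0 < n) : DFA (Fin 4) (Fin n) where
  step := fun i x =>
    if x = 3 then cyc n i else if x = 2 then tp01 n i else if x = 1 then sing n i else i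
  start := ⟨0, h⟩
  accept := {i | i.val = n - 1}

def U4dcba (n : ℕ) (h : 0 < n) : Language (Fin 4) := (U4dcbaDfa n h).accepts

/-- 𝒱ₙ(a,b,c,d): a = cycle, b = transposition (n−2,n−1), c = (n−1 ↦ n−2), d = identity. -/
def Vdfa (n : ℕ) (h : 0 < n) : DFA (Fin 4) (Fin n) where
  step := fun i x =>
    if x = 0 then cyc n i else if x = 1 then tpTop n i else if x = 2 then singTop n i else i
  start := ⟨0, h⟩
  accept := {i | i.val = n - 1}

def V (n : ℕ) (h : 0 < n) : Language (Fin 4) := (Vdfa n h).accepts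

/-- 𝒱ₙ(d,c,b,a): d = cycle, c = transposition (n−2,n−1), b = (n−1 ↦ n−2), a = identity. -/
def VdcbaDfa (n : ℕ) (h : 0 < n) : DFA (Fin 4) (Fin n) where
  step := fun i x =>
    if x = 3 then cyc n i else if x = 2 then tpTop n i else if x = 1 then singTop n i else i
  start := ⟨0, h⟩
  accept := {i | i.val = n - 1}

def Vdcba (n : ℕ) (h : 0 < n) : Language (Fin 4) := (VdcbaDfa n h).accepts

/-- Direct product of two DFAs with a chosen set of final states. -/
def prodDFA {α σ₁ σ₂ : Type} (M : DFA α σ₁) (N : DFA α σ₂) (acc : Set (σ₁ × σ₂)) :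
    DFA α (σ₁ × σ₂) where
  step := fun p x => (M.step p.1 x, N.step p.2 x)
  start := (M.start, N.start)
  accept := acc


/-- Chinese-remainder style pairing k ↦ (k mod m, k mod n). -/
def toPair (m n : ℕ) (hm : 0 < m) (hn : 0 < n) (k : Fin (m * n)) : Fin m × Fin n :=
  (⟨k.val % m, Nat.mod_lt _ hm⟩, ⟨k.val % n, Nat.mod_lt _ hn⟩)

/-- Componentwise successor on the product of two cyclic automata. -/
def prodSucc (m n : ℕ) (p : Fin m × Fin n) : Fin m × Fin n := (cyc m p.1, cyc n p.2)

/-- One-letter subset transition of the reversed NFA of 𝒰ₙ(a,b,c). -/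
def rstep (n : ℕ) (h : 0 < n) (S : Set (Fin n)) (x : Fin 3) : Set (Fin n) :=
  {q | (Udfa n h).step q x ∈ S}

/-- Action of a word on subsets in the reversed NFA of 𝒰ₙ(a,b,c). -/
def rword (n : ℕ) (h : 0 < n) (S : Set (Fin n)) (w : List (Fin 3)) : Set (Fin n) :=
  w.foldl (rstep n h) S

end SCPaper

open SCPaper

open SCPaper


namespace SCAux
open SCPaper

/-- word of k a's -/
def ga (k : ℕ) : List (Fin 2) := List.replicate k 0

lemma cyc_val {n : ℕ} (i : Fin n) : (cyc n i).val = (i.val + 1) % n := rfl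

lemma cyc_val' {n : ℕ} (i : Fin n) :
    (cyc n i).val = if i.val + 1 = n then 0 else i.val + 1 := by
  rw [cyc_val]
  have := i.isLt
  split_ifs with h
  · simp [h]
  · exact Nat.mod_eq_of_lt (by omega)

lemma tp01_val {n : ℕ} (hn : 2 ≤ n) (i : Fin n) :
    (tp01 n i).val = if i.val = 0 then 1 else if i.val = 1 then 0 else i.val := by
  unfold tp01
  by_cases h1 : i.val = 0
  · simp [h1, Nat.mod_eq_of_lt (show 1 < n by omega)]
  · by_cases h2 : i.val = 1 <;> simp [h1, h2]

lemma tp01_invol {n : ℕ} (hn : 2 ≤ n) (i : Fin n) : tp01 n (tp01 n i) = i := by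
  apply Fin.ext
  rw [tp01_val hn, tp01_val hn]
  have := i.isLt
  split_ifs <;> first | omega | exact (False.elim (by assumption))

lemma tp01_inj {n : ℕ} (hn : 2 ≤ n) : Function.Injective (tp01 n) := by
  intro a b h
  have := congrArg (tp01 n) h
  rwa [tp01_invol hn, tp01_invol hn] at this

lemma cyc_inj {n : ℕ} : Function.Injective (cyc n) := by
  intro a b h
  have ha := a.isLt; have hb := b.isLt
  have h' : (cyc n a).val = (cyc n b).val := congrArg Fin.val h
  rw [cyc_val', cyc_val'] at h'
  apply Fin.ext
  split_ifs at h' <;> omega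

lemma U2step_inj {n : ℕ} (hn : 2 ≤ n) (h : 0 < n) (x : Fin 2) :
    Function.Injective (fun i => (U2dfa n h).step i x) := by
  intro a b hab
  have hab' : (if x = 0 then cyc n a else tp01 n a) = (if x = 0 then cyc n b else tp01 n b) := hab
  split_ifs at hab'
  · exact cyc_inj hab'
  · exact tp01_inj hn hab'

lemma U2_eval_a {n : ℕ} (h : 0 < n) (i : Fin n) (k : ℕ) :
    (U2dfa n h).evalFrom i (ga k) = ⟨(i.val + k) % n, Nat.mod_lt _ h⟩ := by
  induction k with
  | zero => simp [ga, DFA.evalFrom_nil, Fin.ext_iff, Nat.mod_eq_of_lt i.isLt]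
  | succ k ih =>
    have : ga (k+1) = ga k ++ [0] := by simp [ga, List.replicate_succ']
    rw [this, DFA.evalFrom_append_singleton, ih]
    apply Fin.ext
    show ((U2dfa n h).step _ 0).val = _
    show (cyc n _).val = _
    rw [cyc_val]
    show (((i.val + k) % n) + 1) % n = (i.val + (k+1)) % n
    rw [Nat.mod_add_mod, Nat.add_assoc]

lemma U2_eval_b {n : ℕ} (h : 0 < n) (i : Fin n) :
    (U2dfa n h).evalFrom i [1] = tp01 n i := by
  rw [DFA.evalFrom_singleton]
  show (if (1 : Fin 2) = 0 then cyc n i else tp01 n i) = tp01 n i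
  norm_num

end SCAux

namespace SCAux
open SCPaper

/-- The gadget word: conjugated double transposition. -/
def gword (m n x : ℕ) : List (Fin 2) :=
  ga (m*n - x) ++ [1] ++ ga m ++ [1] ++ ga (m*n - m + x)

lemma U2_eval_gadget {n : ℕ} (h : 0 < n) (j : Fin n) (a1 a2 a3 : ℕ) :
    (U2dfa n h).evalFrom j (ga a1 ++ [1] ++ ga a2 ++ [1] ++ ga a3) =
      ⟨((tp01 n ⟨((tp01 n ⟨(j.val + a1) % n, Nat.mod_lt _ h⟩).val + a2) % n,
          Nat.mod_lt _ h⟩).val + a3) % n, Nat.mod_lt _ h⟩ := by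
  rw [DFA.evalFrom_of_append, DFA.evalFrom_of_append, DFA.evalFrom_of_append,
    DFA.evalFrom_of_append, U2_eval_a, U2_eval_b, U2_eval_a, U2_eval_b, U2_eval_a]

/-- The gadget fixes the first coordinate. -/
lemma gword_coord1 {m : ℕ} (hm : 2 ≤ m) (h : 0 < m) (i : Fin m) (n x : ℕ) (hn : 1 ≤ n)
    (hx : x ≤ m * n) :
    (U2dfa m h).evalFrom i (gword m n x) = i := by
  rw [gword, U2_eval_gadget]
  apply Fin.ext
  show ((tp01 m ⟨((tp01 m _).val + m) % m, _⟩).val + (m*n - m + x)) % m = i.val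
  have hmn : m ≤ m * n := Nat.le_mul_of_pos_right m (by omega)
  have h1 : ∀ a : Fin m, (⟨(a.val + m) % m, Nat.mod_lt _ h⟩ : Fin m) = a := by
    intro a
    apply Fin.ext
    show (a.val + m) % m = a.val
    rw [Nat.add_mod_right, Nat.mod_eq_of_lt a.isLt]
  rw [h1, tp01_invol hm]
  show ((i.val + (m*n - x)) % m + (m*n - m + x)) % m = i.val
  rw [Nat.mod_add_mod]
  have h2 : i.val + (m*n - x) + (m*n - m + x) = (i.val + (m*n - m)) + m*n := by omega
  rw [h2, Nat.add_mul_mod_self_left]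
  have h3 : m*n - m = m*(n-1) := by rw [Nat.mul_sub, Nat.mul_one]
  rw [h3, Nat.add_mul_mod_self_left, Nat.mod_eq_of_lt i.isLt]

/-- Case m + 2 ≤ n : the gadget advances the second coordinate by one. -/
lemma gword_coord2_far {m n : ℕ} (hm : 1 ≤ m) (hmn : m + 2 ≤ n) (h : 0 < n) (j : Fin n) :
    (U2dfa n h).evalFrom j (gword m n j.val) = cyc n j := by
  rw [gword, U2_eval_gadget]
  apply Fin.ext
  have hjle : j.val ≤ m * n := le_trans (le_of_lt j.isLt) (Nat.le_mul_of_pos_left n (by omega))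
  have e1 : (j.val + (m*n - j.val)) % n = 0 := by
    rw [Nat.add_sub_cancel' hjle, Nat.mul_mod_left]
  simp only [e1]
  have e2 : (tp01 n ⟨0, h⟩).val = 1 := by rw [tp01_val (by omega : 2 ≤ n)]; rfl
  simp only [e2]
  have e3 : (1 + m) % n = 1 + m := Nat.mod_eq_of_lt (by omega)
  simp only [e3]
  have e4 : (tp01 n ⟨1 + m, by omega⟩).val = 1 + m := by
    rw [tp01_val (by omega)]; simp; omega
  simp only [e4]
  show (1 + m + (m*n - m + j.val)) % n = (cyc n j).val
  rw [cyc_val]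
  have hmle : m ≤ m * n := Nat.le_mul_of_pos_right m (by omega)
  have h2 : 1 + m + (m*n - m + j.val) = (j.val + 1) + m*n := by omega
  rw [h2, Nat.add_mul_mod_self_right]

lemma mnm_mod {n m : ℕ} (hm : 3 ≤ m) (hmn : m + 1 = n) (a : ℕ) :
    (a + (m*n - m)) % n = (a + 1) % n := by
  have h3 : m*n - m = m*(n-1) := by rw [Nat.mul_sub, Nat.mul_one]
  have h4 : m * (n-1) = m * m := by rw [show n - 1 = m by omega]
  have h5 : m * m = (n-2)*n + 1 := by
    obtain ⟨k, rfl⟩ : ∃ k, n = k + 2 := ⟨n - 2, by omega⟩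
    have hmk : m = k + 1 := by omega
    subst hmk
    simp [Nat.add_sub_cancel]
    ring
  rw [h3, h4, h5, show a + ((n-2)*n + 1) = (a + 1) + (n-2)*n by omega,
    Nat.add_mul_mod_self_right]

/-- Case m + 1 = n : the gadget advances the second coordinate by two. -/
lemma gword_coord2_near1 {m n : ℕ} (hm : 3 ≤ m) (hmn : m + 1 = n) (h : 0 < n) (j : Fin n) :
    (U2dfa n h).evalFrom j (gword m n j.val) = ⟨(j.val + 2) % n, Nat.mod_lt _ h⟩ := by
  rw [gword, U2_eval_gadget]
  apply Fin.ext
  have hjle : j.val ≤ m * n := le_trans (le_of_lt j.isLt) (Nat.le_mul_of_pos_left n (by omega))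
  have e1 : (j.val + (m*n - j.val)) % n = 0 := by
    rw [Nat.add_sub_cancel' hjle, Nat.mul_mod_left]
  simp only [e1]
  have e2 : (tp01 n ⟨0, h⟩).val = 1 := by rw [tp01_val (by omega : 2 ≤ n)]; rfl
  simp only [e2]
  have e3 : (1 + m) % n = 0 := by rw [show 1 + m = n by omega, Nat.mod_self]
  simp only [e3]
  simp only [e2]
  show (1 + (m*n - m + j.val)) % n = (j.val + 2) % n
  rw [show 1 + (m*n - m + j.val) = (j.val + 1) + (m*n - m) by omega, mnm_mod hm hmn,
    show j.val + 1 + 1 = j.val + 2 from rfl]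

lemma gword_coord2_near2 {m n : ℕ} (hm : 3 ≤ m) (hmn : m + 1 = n) (h : 0 < n) (j : Fin n) :
    (U2dfa n h).evalFrom ⟨(j.val + 2) % n, Nat.mod_lt _ h⟩ (gword m n j.val) = cyc n j := by
  rw [gword, U2_eval_gadget]
  apply Fin.ext
  have hjle : j.val ≤ m * n := le_trans (le_of_lt j.isLt) (Nat.le_mul_of_pos_left n (by omega))
  have e1 : ((j.val + 2) % n + (m*n - j.val)) % n = 2 := by
    rw [Nat.mod_add_mod, show j.val + 2 + (m*n - j.val) = 2 + m*n by omega,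
      Nat.add_mul_mod_self_right]
    exact Nat.mod_eq_of_lt (by omega)
  simp only [e1]
  have e2 : (tp01 n ⟨2, by omega⟩).val = 2 := by rw [tp01_val (by omega : 2 ≤ n)]; norm_num
  simp only [e2]
  have e3 : (2 + m) % n = 1 := by
    rw [show 2 + m = 1 + n by omega, Nat.add_mod_right]
    exact Nat.mod_eq_of_lt (by omega)
  simp only [e3]
  have e4 : (tp01 n ⟨1, by omega⟩).val = 0 := by rw [tp01_val (by omega : 2 ≤ n)]; norm_num
  simp only [e4]
  show (0 + (m*n - m + j.val)) % n = (cyc n j).val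
  rw [cyc_val, Nat.zero_add, Nat.add_comm (m*n - m) j.val, mnm_mod hm hmn]

lemma prod_evalFrom {α σ₁ σ₂ : Type} (M : DFA α σ₁) (N : DFA α σ₂) (acc : Set (σ₁ × σ₂))
    (p : σ₁ × σ₂) (w : List α) :
    (prodDFA M N acc).evalFrom p w = (M.evalFrom p.1 w, N.evalFrom p.2 w) := by
  induction w generalizing p with
  | nil => rfl
  | cons x w ih =>
    show (prodDFA M N acc).evalFrom ((prodDFA M N acc).step p x) w = _
    rw [ih]
    rfl

/-- Increment the second coordinate while fixing the first (m < n). -/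
lemma inc_second {m n : ℕ} (hm : 3 ≤ m) (hmn : m < n) (h1 : 0 < m) (h2 : 0 < n)
    (i : Fin m) (j : Fin n) :
    ∃ w : List (Fin 2), (U2dfa m h1).evalFrom i w = i ∧
      (U2dfa n h2).evalFrom j w = cyc n j := by
  have hjle : j.val ≤ m * n := le_trans j.isLt.le (Nat.le_mul_of_pos_left n h1)
  rcases Nat.lt_or_ge (m + 1) n with hfar | hnear
  · exact ⟨gword m n j.val,
      gword_coord1 (by omega) h1 i n j.val (by omega) hjle,
      gword_coord2_far (m := m) (n := n) (by omega) (by omega) h2 j⟩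
  · have hmn1 : m + 1 = n := by omega
    refine ⟨gword m n j.val ++ gword m n j.val, ?_, ?_⟩
    · rw [DFA.evalFrom_of_append, gword_coord1 (by omega) h1 i n j.val (by omega) hjle,
        gword_coord1 (by omega) h1 i n j.val (by omega) hjle]
    · rw [DFA.evalFrom_of_append, gword_coord2_near1 hm hmn1 h2 j,
        gword_coord2_near2 hm hmn1 h2 j]

/-- Add t to the second coordinate while fixing the first (m < n). -/
lemma add_second {m n : ℕ} (hm : 3 ≤ m) (hmn : m < n) (h1 : 0 < m) (h2 : 0 < n)
    (t : ℕ) (i : Fin m) (j : Fin n) :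
    ∃ w : List (Fin 2), (U2dfa m h1).evalFrom i w = i ∧
      (U2dfa n h2).evalFrom j w = ⟨(j.val + t) % n, Nat.mod_lt _ h2⟩ := by
  induction t with
  | zero =>
    exact ⟨[], rfl, by apply Fin.ext; simp [Nat.mod_eq_of_lt j.isLt]⟩
  | succ t ih =>
    obtain ⟨w, hw1, hw2⟩ := ih
    obtain ⟨w', hw1', hw2'⟩ := inc_second hm hmn h1 h2 i ⟨(j.val + t) % n, Nat.mod_lt _ h2⟩
    refine ⟨w ++ w', ?_, ?_⟩
    · rw [DFA.evalFrom_of_append, hw1, hw1']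
    · rw [DFA.evalFrom_of_append, hw2, hw2']
      apply Fin.ext
      rw [cyc_val]
      show ((j.val + t) % n + 1) % n = (j.val + (t+1)) % n
      rw [Nat.mod_add_mod, Nat.add_assoc]

/-- Reachability from (0,0), coordinatewise, assuming m < n. -/
lemma reach_lt {m n : ℕ} (hm : 3 ≤ m) (hmn : m < n) (h1 : 0 < m) (h2 : 0 < n)
    (p : Fin m) (q : Fin n) :
    ∃ w : List (Fin 2), (U2dfa m h1).evalFrom ⟨0, h1⟩ w = p ∧
      (U2dfa n h2).evalFrom ⟨0, h2⟩ w = q := by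
  obtain ⟨w, hw1, hw2⟩ := add_second hm hmn h1 h2 (q.val + n - p.val % n)
    p ⟨p.val % n, Nat.mod_lt _ h2⟩
  refine ⟨ga p.val ++ w, ?_, ?_⟩
  · rw [DFA.evalFrom_of_append, U2_eval_a]
    have : ((⟨0, h1⟩ : Fin m).val + p.val) % m = p.val := by
      simp [Nat.mod_eq_of_lt p.isLt]
    rw [show (⟨((⟨0, h1⟩ : Fin m).val + p.val) % m, Nat.mod_lt _ h1⟩ : Fin m) = p from
      Fin.ext this]
    exact hw1
  · rw [DFA.evalFrom_of_append, U2_eval_a]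
    have e : (⟨((⟨0, h2⟩ : Fin n).val + p.val) % n, Nat.mod_lt _ h2⟩ : Fin n)
        = ⟨p.val % n, Nat.mod_lt _ h2⟩ := by
      apply Fin.ext; simp
    rw [e, hw2]
    apply Fin.ext
    show (p.val % n + (q.val + n - p.val % n)) % n = q.val
    have hp : p.val % n < n := Nat.mod_lt _ h2
    rw [show p.val % n + (q.val + n - p.val % n) = q.val + n by omega,
      Nat.add_mod_right, Nat.mod_eq_of_lt q.isLt]

/-- Reachability from (0,0), coordinatewise, for m ≠ n. -/
lemma reach_ne {m n : ℕ} (hm : 3 ≤ m) (hn : 3 ≤ n) (hmn : m ≠ n) (h1 : 0 < m) (h2 : 0 < n)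
    (p : Fin m) (q : Fin n) :
    ∃ w : List (Fin 2), (U2dfa m h1).evalFrom ⟨0, h1⟩ w = p ∧
      (U2dfa n h2).evalFrom ⟨0, h2⟩ w = q := by
  rcases Nat.lt_or_ge m n with hlt | hge
  · exact reach_lt hm hlt h1 h2 p q
  · obtain ⟨w, hw1, hw2⟩ := reach_lt hn (by omega) h2 h1 q p
    exact ⟨w, hw2, hw1⟩

lemma evalFrom_inj {α σ : Type} (M : DFA α σ)
    (hstep : ∀ x : α, Function.Injective (fun s => M.step s x)) (w : List α) :
    Function.Injective (fun s => M.evalFrom s w) := by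
  induction w with
  | nil => exact fun a b h => h
  | cons x w ih =>
    intro a b h
    exact hstep x (ih h)

lemma evalFrom_flatten_replicate {α σ : Type} (M : DFA α σ) (w : List α) (k : ℕ) (s : σ) :
    M.evalFrom s (List.flatten (List.replicate k w)) = (fun t => M.evalFrom t w)^[k] s := by
  induction k generalizing s with
  | zero => rfl
  | succ k ih =>
    rw [List.replicate_succ, List.flatten_cons, DFA.evalFrom_of_append, ih,
      Function.iterate_succ_apply]

/-- In a finite DFA with injective letter actions, every word has a "return word". -/
lemma return_word {α σ : Type} [Finite σ] (M : DFA α σ)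
    (hstep : ∀ x : α, Function.Injective (fun s => M.step s x)) (w : List α) (s : σ) :
    ∃ u : List α, M.evalFrom (M.evalFrom s w) u = s := by
  set f : σ → σ := fun t => M.evalFrom t w with hf
  have hinj : Function.Injective f := evalFrom_inj M hstep w
  obtain ⟨a, b, hab, heq⟩ := Finite.exists_ne_map_eq_of_infinite (fun k : ℕ => f^[k] s)
  wlog hlt : a < b generalizing a b
  · exact this b a hab.symm heq.symm (by omega)
  have hcycle : f^[b - a] s = s := by
    have hiter : Function.Injective (f^[a]) := Function.Injective.iterate hinj a
    apply hiter
    rw [← Function.iterate_add_apply]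
    rw [show a + (b - a) = b by omega]
    exact heq.symm
  refine ⟨List.flatten (List.replicate (b - a - 1) w), ?_⟩
  rw [evalFrom_flatten_replicate]
  show (fun t => M.evalFrom t w)^[b-a-1] (f s) = s
  rw [← Function.iterate_succ_apply, Nat.succ_eq_add_one,
    show b - a - 1 + 1 = b - a by omega]
  exact hcycle

section Product

variable {m n : ℕ}

/-- The final-state set. -/
def FF (m n : ℕ) : Set (Fin m × Fin n) := {x | x.1.val = m - 1 ∧ x.2.val = n - 1}

lemma P_step_inj (h1 : 0 < m) (h2 : 0 < n) (hm : 2 ≤ m) (hn : 2 ≤ n)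
    (acc : Set (Fin m × Fin n)) (x : Fin 2) :
    Function.Injective
      (fun s => (prodDFA (U2dfa m h1) (U2dfa n h2) acc).step s x) := by
  intro a b hab
  have h1' : (U2dfa m h1).step a.1 x = (U2dfa m h1).step b.1 x := congrArg Prod.fst hab
  have h2' : (U2dfa n h2).step a.2 x = (U2dfa n h2).step b.2 x := congrArg Prod.snd hab
  exact Prod.ext (U2step_inj hm h1 x h1') (U2step_inj hn h2 x h2')

lemma P_reach0 (hm : 3 ≤ m) (hn : 3 ≤ n) (hmn : m ≠ n) (h1 : 0 < m) (h2 : 0 < n)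
    (acc : Set (Fin m × Fin n)) (p : Fin m × Fin n) :
    ∃ w : List (Fin 2),
      (prodDFA (U2dfa m h1) (U2dfa n h2) acc).eval w = p := by
  obtain ⟨w, hw1, hw2⟩ := reach_ne hm hn hmn h1 h2 p.1 p.2
  refine ⟨w, ?_⟩
  show (prodDFA (U2dfa m h1) (U2dfa n h2) acc).evalFrom _ w = p
  rw [prod_evalFrom]
  show ((U2dfa m h1).evalFrom ⟨0, h1⟩ w, (U2dfa n h2).evalFrom ⟨0, h2⟩ w) = p
  rw [hw1, hw2]

lemma P_reach (hm : 3 ≤ m) (hn : 3 ≤ n) (hmn : m ≠ n) (h1 : 0 < m) (h2 : 0 < n)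
    (acc : Set (Fin m × Fin n)) (p q : Fin m × Fin n) :
    ∃ w : List (Fin 2),
      (prodDFA (U2dfa m h1) (U2dfa n h2) acc).evalFrom p w = q := by
  set P := prodDFA (U2dfa m h1) (U2dfa n h2) acc with hP
  obtain ⟨w1, hw1⟩ := P_reach0 hm hn hmn h1 h2 acc p
  obtain ⟨w2, hw2⟩ := P_reach0 hm hn hmn h1 h2 acc q
  obtain ⟨u, hu⟩ := return_word P (P_step_inj h1 h2 (by omega) (by omega) acc) w1 P.start
  rw [show P.evalFrom P.start w1 = p from hw1] at hu
  exact ⟨u ++ w2, by rw [DFA.evalFrom_of_append, hu]; exact hw2⟩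

lemma P_distinguish (hm : 3 ≤ m) (hn : 3 ≤ n) (hmn : m ≠ n) (h1 : 0 < m) (h2 : 0 < n)
    (p q : Fin m × Fin n) (hpq : p ≠ q) :
    ∃ w : List (Fin 2),
      Xor' ((prodDFA (U2dfa m h1) (U2dfa n h2) (FF m n)).evalFrom p w ∈ FF m n)
           ((prodDFA (U2dfa m h1) (U2dfa n h2) (FF m n)).evalFrom q w ∈ FF m n) := by
  set P := prodDFA (U2dfa m h1) (U2dfa n h2) (FF m n) with hP
  obtain ⟨w, hw⟩ := P_reach hm hn hmn h1 h2 (FF m n) p (⟨m-1, by omega⟩, ⟨n-1, by omega⟩)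
  refine ⟨w, Or.inl ⟨?_, ?_⟩⟩
  · rw [hw]; exact ⟨rfl, rfl⟩
  · intro hmem
    have hq : P.evalFrom q w = (⟨m-1, by omega⟩, ⟨n-1, by omega⟩) := by
      obtain ⟨hq1, hq2⟩ := hmem
      exact Prod.ext (Fin.ext hq1) (Fin.ext hq2)
    have : p = q := by
      have := hw.trans hq.symm
      exact evalFrom_inj P (P_step_inj h1 h2 (by omega) (by omega) (FF m n)) w this
    exact hpq this

lemma P_accepts (h1 : 0 < m) (h2 : 0 < n) :
    (prodDFA (U2dfa m h1) (U2dfa n h2) (FF m n)).accepts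
      = linter (U2 m h1) (U2 n h2) := by
  ext w
  show (prodDFA (U2dfa m h1) (U2dfa n h2) (FF m n)).eval w ∈ FF m n ↔ _
  show _ ↔ (w ∈ (U2dfa m h1).accepts ∧ w ∈ (U2dfa n h2).accepts)
  rw [DFA.mem_accepts, DFA.mem_accepts]
  show (prodDFA (U2dfa m h1) (U2dfa n h2) (FF m n)).evalFrom _ w ∈ FF m n ↔ _
  rw [prod_evalFrom]
  exact Iff.rfl

/-- Transport a DFA along an equivalence of state sets. -/
lemma dfa_transport {α σ τ : Type} (M : DFA α σ) (e : σ ≃ τ) :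
    ∃ N : DFA α τ, N.accepts = M.accepts := by
  refine ⟨⟨fun s x => e (M.step (e.symm s) x), e M.start, e.symm ⁻¹' M.accept⟩, ?_⟩
  set N : DFA α τ := ⟨fun s x => e (M.step (e.symm s) x), e M.start, e.symm ⁻¹' M.accept⟩
  have key : ∀ (w : List α) (s : σ), N.evalFrom (e s) w = e (M.evalFrom s w) := by
    intro w
    induction w with
    | nil => intro s; rfl
    | cons x w ih =>
      intro s
      show N.evalFrom (N.step (e s) x) w = _
      have : N.step (e s) x = e (M.step s x) := by
        show e (M.step (e.symm (e s)) x) = _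
        rw [e.symm_apply_apply]
      rw [this, ih]
      rfl
  ext w
  rw [DFA.mem_accepts, DFA.mem_accepts]
  show N.evalFrom (e M.start) w ∈ N.accept ↔ _
  rw [key]
  show e.symm (e (M.evalFrom M.start w)) ∈ M.accept ↔ _
  rw [e.symm_apply_apply]
  rfl

end Product

section SC

variable {m n : ℕ}

lemma sc_upper (h1 : 0 < m) (h2 : 0 < n) :
    m * n ∈ complexitySet (linter (U2 m h1) (U2 n h2)) := by
  obtain ⟨N, hN⟩ := dfa_transport (prodDFA (U2dfa m h1) (U2dfa n h2) (FF m n))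
    (finProdFinEquiv : Fin m × Fin n ≃ Fin (m * n))
  exact ⟨N, hN.trans (P_accepts h1 h2)⟩

lemma sc_lower (hm : 3 ≤ m) (hn : 3 ≤ n) (hmn : m ≠ n) (h1 : 0 < m) (h2 : 0 < n)
    (k : ℕ) (hk : k ∈ complexitySet (linter (U2 m h1) (U2 n h2))) : m * n ≤ k := by
  obtain ⟨M, hM⟩ := hk
  set P := prodDFA (U2dfa m h1) (U2dfa n h2) (FF m n) with hP
  have hacc : ∀ u : List (Fin 2), u ∈ M.accepts ↔ P.evalFrom P.start u ∈ FF m n := by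
    intro u
    rw [hM, ← P_accepts h1 h2, DFA.mem_accepts]
    exact Iff.rfl
  -- choose reaching words
  have hreach := fun p => P_reach0 hm hn hmn h1 h2 (FF m n) p
  choose wd hwd using hreach
  set f : Fin m × Fin n → Fin k := fun p => M.eval (wd p) with hf
  have hinj : Function.Injective f := by
    intro p q hfpq
    by_contra hpq
    obtain ⟨w, hxor⟩ := P_distinguish hm hn hmn h1 h2 p q hpq
    have hMeq : M.eval (wd p ++ w) = M.eval (wd q ++ w) := by
      show M.evalFrom M.start _ = M.evalFrom M.start _
      rw [DFA.evalFrom_of_append, DFA.evalFrom_of_append]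
      show M.evalFrom (f p) w = M.evalFrom (f q) w
      rw [hfpq]
    have hp : (wd p ++ w) ∈ M.accepts ↔ P.evalFrom p w ∈ FF m n := by
      rw [hacc, DFA.evalFrom_of_append, show P.evalFrom P.start (wd p) = p from hwd p]
    have hq : (wd q ++ w) ∈ M.accepts ↔ P.evalFrom q w ∈ FF m n := by
      rw [hacc, DFA.evalFrom_of_append, show P.evalFrom P.start (wd q) = q from hwd q]
    have hmemeq : ((wd p ++ w) ∈ M.accepts) ↔ ((wd q ++ w) ∈ M.accepts) := by
      rw [DFA.mem_accepts, DFA.mem_accepts, hMeq]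
    rcases hxor with ⟨ha, hb⟩ | ⟨ha, hb⟩
    · exact hb ((hq.mp (hmemeq.mp (hp.mpr ha))))
    · exact hb ((hp.mp (hmemeq.mpr (hq.mpr ha))))
  calc m * n = Fintype.card (Fin m × Fin n) := by simp
    _ ≤ Fintype.card (Fin k) := Fintype.card_le_of_injective f hinj
    _ = k := by simp

lemma sc_eq (hm : 3 ≤ m) (hn : 3 ≤ n) (hmn : m ≠ n) (h1 : 0 < m) (h2 : 0 < n) :
    sc (linter (U2 m h1) (U2 n h2)) = m * n := by
  apply le_antisymm
  · exact Nat.sInf_le (sc_upper h1 h2)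
  · exact le_csInf ⟨m * n, sc_upper h1 h2⟩ (fun k hk => sc_lower hm hn hmn h1 h2 k hk)

end SC
end SCAux
open SCAux in
theorem inter_same_stream_tight (m n : ℕ) (hm : 3 ≤ m) (hn : 3 ≤ n) (hmn : m ≠ n) :
    sc (linter (U2 m (by omega)) (U2 n (by omega))) = m * n ∧
    (∀ p : Fin m × Fin n, ∃ w : List (Fin 2),
      (prodDFA (U2dfa m (by omega)) (U2dfa n (by omega)) ({x : Fin m × Fin n | x.1.val = m - 1 ∧ x.2.val = n - 1} : Set (Fin m × Fin n))).eval w = p) ∧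
    (∀ p q : Fin m × Fin n, p ≠ q → ∃ w : List (Fin 2),
      Xor' ((prodDFA (U2dfa m (by omega)) (U2dfa n (by omega)) ({x : Fin m × Fin n | x.1.val = m - 1 ∧ x.2.val = n - 1} : Set (Fin m × Fin n))).evalFrom p w ∈ ({x : Fin m × Fin n | x.1.val = m - 1 ∧ x.2.val = n - 1} : Set (Fin m × Fin n)))
           ((prodDFA (U2dfa m (by omega)) (U2dfa n (by omega)) ({x : Fin m × Fin n | x.1.val = m - 1 ∧ x.2.val = n - 1} : Set (Fin m × Fin n))).evalFrom q w ∈ ({x : Fin m × Fin n | x.1.val = m - 1 ∧ x.2.val = n - 1} : Set (Fin m × Fin n)))) := by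
  refine ⟨SCAux.sc_eq hm hn hmn (by omega) (by omega), ?_, ?_⟩
  · intro p
    exact SCAux.P_reach0 hm hn hmn (by omega) (by omega) _ p
  · intro p q hpq
    exact SCAux.P_distinguish hm hn hmn (by omega) (by omega) p q hpq
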